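/- Let V : ℝᵈ → ℝ be twice continuously differentiable, Γ a real symmetric positive definite d×d matrix, J₁, J₂ real antisymmetric d×d matrices, and μ, ν ∈ ℝ. Set G = νJ₂ + Γ (which is invertible). Then the unnormalized density e^{−V} is a stationary solution of the Fokker–Planck equation of the limiting overdamped dynamics: for all x ∈ ℝᵈ, ∇·( e^{−V(x)}·( G⁻¹ + μJ₁ − G⁻¹Γ(−νJ₂ + Γ)⁻¹ )·∇V(x) ) = 0. -/

import Mathlib

open Matrix

private lemma antisym_sym_sum {d : ℕ} (A : Matrix (Fin d) (Fin d) ℝ)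
    (hA : ∀ i j, A j i = -A i j) (S : Fin d → Fin d → ℝ) (hS : ∀ i j, S i j = S j i) :
    ∑ i, ∑ j, A i j * S i j = 0 := by
  have h : ∑ i, ∑ j, A i j * S i j = ∑ i, ∑ j, -(A i j * S i j) := by
    rw [Finset.sum_comm]
    refine Finset.sum_congr rfl fun i _ => Finset.sum_congr rfl fun j _ => ?_
    rw [hA i j, hS i j]; ring
  simp only [Finset.sum_neg_distrib] at h
  linarith

/-- The target density `e^{-V}` is stationary for the Fokker–Planck operator of
the limiting overdamped dynamics: with `G = νJ₂ + Γ` (invertible),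
`∇·( e^{-V} (G⁻¹ + μJ₁ - G⁻¹Γ(-νJ₂+Γ)⁻¹) ∇V ) = 0`. -/
theorem stmt19 {d : ℕ} (V : (Fin d → ℝ) → ℝ) (hV : ContDiff ℝ 2 V)
    (Γ J₁ J₂ : Matrix (Fin d) (Fin d) ℝ) (hΓ : Γ.PosDef)
    (hJ₁ : J₁ᵀ = -J₁) (hJ₂ : J₂ᵀ = -J₂) (μ ν : ℝ)
    (G : Matrix (Fin d) (Fin d) ℝ) (hG : G = ν • J₂ + Γ) :
    IsUnit G ∧
    ∀ x : Fin d → ℝ,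
      ∑ i, fderiv ℝ (fun y => Real.exp (-V y) *
          ((G⁻¹ + μ • J₁ - G⁻¹ * Γ * (-(ν • J₂) + Γ)⁻¹).mulVec
            (fun j => fderiv ℝ V y (Pi.single j 1))) i)
        x (Pi.single i 1) = 0 := by
  classical
  have hΓs : Γᵀ = Γ := by
    have h := hΓ.1
    simpa [Matrix.IsHermitian] using h
  -- invertibility of G
  have hGu : IsUnit G := by
    rw [← Matrix.mulVec_injective_iff_isUnit]
    have key : ∀ v, G.mulVec v = 0 → v = 0 := by
      intro v hv
      by_contra hne
      have hJ : v ⬝ᵥ (J₂ *ᵥ v) = 0 := by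
        have h1 : v ⬝ᵥ (J₂ *ᵥ v) = - (v ⬝ᵥ (J₂ *ᵥ v)) := by
          conv_lhs => rw [Matrix.dotProduct_mulVec, ← Matrix.mulVec_transpose, hJ₂,
            Matrix.neg_mulVec, neg_dotProduct, dotProduct_comm]
        linarith
      have hΓv : v ⬝ᵥ (Γ *ᵥ v) = 0 := by
        have h2 : v ⬝ᵥ (G *ᵥ v) = 0 := by rw [hv]; simp
        rw [hG, Matrix.add_mulVec, dotProduct_add, Matrix.smul_mulVec,
          dotProduct_smul] at h2
        rw [hJ] at h2
        simpa using h2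
      have := hΓ.dotProduct_mulVec_pos hne
      simp only [star_trivial] at this
      rw [hΓv] at this
      exact lt_irrefl 0 this
    intro v w h
    have h0 := key (v - w) (by rw [Matrix.mulVec_sub, h, sub_self])
    exact sub_eq_zero.mp h0
  refine ⟨hGu, ?_⟩
  -- the diffusion-drift matrix is antisymmetric
  set A : Matrix (Fin d) (Fin d) ℝ := G⁻¹ + μ • J₁ - G⁻¹ * Γ * (-(ν • J₂) + Γ)⁻¹ with hAdef
  have hAanti : Aᵀ = -A := by
    have hdet : IsUnit G.det := (Matrix.isUnit_iff_isUnit_det G).mp hGu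
    have hGT : Gᵀ = -(ν • J₂) + Γ := by
      rw [hG, Matrix.transpose_add, Matrix.transpose_smul, hJ₂, hΓs, smul_neg]
    have hdetT : IsUnit Gᵀ.det := by rwa [Matrix.det_transpose]
    rw [hAdef, ← hGT]
    have e1 : G⁻¹ * (Gᵀ + G) * (Gᵀ)⁻¹ = G⁻¹ + (Gᵀ)⁻¹ := by
      rw [mul_add, add_mul, mul_assoc G⁻¹ Gᵀ, Matrix.mul_nonsing_inv _ hdetT, mul_one,
        Matrix.nonsing_inv_mul _ hdet, one_mul]
    have h2Γ : Gᵀ + G = Γ + Γ := by rw [hGT, hG]; abel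
    have key : G⁻¹ + (Gᵀ)⁻¹ = G⁻¹ * Γ * (Gᵀ)⁻¹ + G⁻¹ * Γ * (Gᵀ)⁻¹ := by
      rw [← e1, h2Γ, mul_add, add_mul]
    have ht : (G⁻¹ * Γ * (Gᵀ)⁻¹)ᵀ = G⁻¹ * Γ * (Gᵀ)⁻¹ := by
      rw [Matrix.transpose_mul, Matrix.transpose_mul, Matrix.transpose_nonsing_inv,
        Matrix.transpose_nonsing_inv, Matrix.transpose_transpose, hΓs, mul_assoc]
    rw [Matrix.transpose_sub, Matrix.transpose_add, Matrix.transpose_smul, hJ₁,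
      Matrix.transpose_nonsing_inv, ht, smul_neg]
    calc (Gᵀ)⁻¹ + -(μ • J₁) - G⁻¹ * Γ * (Gᵀ)⁻¹
        = (G⁻¹ + (Gᵀ)⁻¹) - G⁻¹ + -(μ • J₁) - G⁻¹ * Γ * (Gᵀ)⁻¹ := by abel
      _ = (G⁻¹ * Γ * (Gᵀ)⁻¹ + G⁻¹ * Γ * (Gᵀ)⁻¹) - G⁻¹ + -(μ • J₁) - G⁻¹ * Γ * (Gᵀ)⁻¹ := by
          rw [key]
      _ = -(G⁻¹ + μ • J₁ - G⁻¹ * Γ * (Gᵀ)⁻¹) := by abel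
  have hA : ∀ i j, A j i = -A i j := by
    intro i j
    have h1 := congrFun (congrFun hAanti i) j
    simpa [Matrix.transpose_apply] using h1
  -- the analytic part
  intro x
  have hV1 : Differentiable ℝ V := hV.differentiable (by norm_num)
  have hf'cd : ContDiff ℝ 1 (fderiv ℝ V) := hV.fderiv_right (by norm_num)
  have hf'd : Differentiable ℝ (fderiv ℝ V) := hf'cd.differentiable one_ne_zero
  set g : Fin d → ℝ := fun i => fderiv ℝ V x (Pi.single i 1) with hg
  set f'' := fderiv ℝ (fderiv ℝ V) x with hf''
  have hsymm : ∀ v w, f'' v w = f'' w v :=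
    second_derivative_symmetric (fun y => (hV1 y).hasFDerivAt) ((hf'd x).hasFDerivAt)
  set S : Fin d → Fin d → ℝ :=
    fun i j => f'' (Pi.single i 1) (Pi.single j 1) - g i * g j with hS
  have hexp : HasFDerivAt (fun y => Real.exp (-V y))
      (Real.exp (-V x) • (-(fderiv ℝ V x))) x :=
    by have := (Real.hasDerivAt_exp (-V x)).comp_hasFDerivAt x ((hV1 x).hasFDerivAt.fun_neg); exact this
  have hterm : ∀ i, fderiv ℝ (fun y => Real.exp (-V y) *
      (A.mulVec (fun j => fderiv ℝ V y (Pi.single j 1))) i) x (Pi.single i 1)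
      = Real.exp (-V x) * ∑ j, A i j * S i j := by
    intro i
    have hj : ∀ j : Fin d, HasFDerivAt (fun y => fderiv ℝ V y (Pi.single j 1))
        (((fderiv ℝ V x).comp (0 : (Fin d → ℝ) →L[ℝ] (Fin d → ℝ))) +
          f''.flip (Pi.single j 1)) x :=
      fun j => (hf'd x).hasFDerivAt.clm_apply (hasFDerivAt_const _ _)
    have hsum : HasFDerivAt (fun y => ∑ j, A i j * fderiv ℝ V y (Pi.single j 1))
        (∑ j, A i j • (((fderiv ℝ V x).comp (0 : (Fin d → ℝ) →L[ℝ] (Fin d → ℝ))) +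
          f''.flip (Pi.single j 1))) x :=
      HasFDerivAt.fun_sum (fun j _ => (hj j).const_mul (A i j))
    have hmul := hexp.fun_mul hsum
    have hfun : (fun y => Real.exp (-V y) *
        (A.mulVec (fun j => fderiv ℝ V y (Pi.single j 1))) i)
        = fun y => Real.exp (-V y) * ∑ j, A i j * fderiv ℝ V y (Pi.single j 1) := by
      funext y
      simp [Matrix.mulVec, dotProduct]
    rw [hfun, hmul.fderiv]
    simp only [ContinuousLinearMap.add_apply, ContinuousLinearMap.smul_apply,
      ContinuousLinearMap.coe_sum', Finset.sum_apply, ContinuousLinearMap.comp_apply,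
      ContinuousLinearMap.zero_apply, map_zero, ContinuousLinearMap.flip_apply,
      ContinuousLinearMap.neg_apply, smul_eq_mul, zero_add]
    rw [Finset.mul_sum, Finset.mul_sum]
    rw [Finset.sum_mul, ← Finset.sum_add_distrib]
    apply Finset.sum_congr rfl
    intro j _
    simp only [hS, ← hg]
    ring
  rw [Finset.sum_congr rfl (fun i _ => hterm i), ← Finset.mul_sum]
  have h0 : ∑ i, ∑ j, A i j * S i j = 0 := by
    apply antisym_sym_sum A hA
    intro i j
    simp only [hS]
    rw [hsymm (Pi.single i 1) (Pi.single j 1)]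
    ring
  rw [h0, mul_zero]
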